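/- Let M/K be a finite Galois extension of local fields and let L be a subfield of M containing K that is normal over K. Suppose M/L is abelian of exponent r and K contains a primitive r-th root of unity. Then VC(M/K) implies VC(M/L). Moreover, under these hypotheses, every element x ∈ M that is normal over K is also normal over L. -/

import Mathlib

/-- A local field structure on a field `K`: a normalized (surjective) discrete
valuation `v : K* ↠ ℤ`, extended by a junk value at `0`, with respect to which
`K` is complete. -/
structure LocalFieldStruct (K : Type) [Field K] where
  /-- the valuation; its value at `0` is irrelevant -/
  v : K → ℤ
  v_mul : ∀ x y : K, x ≠ 0 → y ≠ 0 → v (x * y) = v x + v y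
  v_add : ∀ x y : K, x ≠ 0 → y ≠ 0 → x + y ≠ 0 → min (v x) (v y) ≤ v (x + y)
  v_surj : ∀ n : ℤ, ∃ x : K, x ≠ 0 ∧ v x = n
  complete : ∀ a : ℕ → K,
      (∀ N : ℤ, ∃ M : ℕ, ∀ m : ℕ, M ≤ m → ∀ n : ℕ, M ≤ n →
        a m = a n ∨ N ≤ v (a m - a n)) →
      ∃ x : K, ∀ N : ℤ, ∃ M : ℕ, ∀ n : ℕ, M ≤ n → a n = x ∨ N ≤ v (a n - x)

namespace LocalFieldStruct

variable {K L : Type} [Field K] [Field L]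

/-- `x` lies in the valuation ring `O_K`. -/
def Integral (w : LocalFieldStruct K) (x : K) : Prop :=
  x = 0 ∨ 0 ≤ w.v x

/-- The residue characteristic of `K` is the prime `p`, i.e. `p` maps to `0`
in the residue field of the valuation ring. -/
def ResidueCharP (w : LocalFieldStruct K) (p : ℕ) : Prop :=
  p.Prime ∧ ((p : K) = 0 ∨ 0 < w.v (p : K))

/-- `K` has mixed characteristic `(0, p)`: `K` has characteristic `0` and its
residue field has characteristic `p > 0`. -/
def MixedChar (w : LocalFieldStruct K) (p : ℕ) : Prop :=
  CharZero K ∧ p.Prime ∧ 0 < w.v (p : K)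

/-- `e` is the ramification index `e_{L/K}`: the valuation of `L` restricted to
`K` is `e` times the valuation of `K`. -/
def IsRamificationIndex (wK : LocalFieldStruct K) (wL : LocalFieldStruct L)
    [Algebra K L] (e : ℕ) : Prop :=
  0 < e ∧ ∀ x : K, x ≠ 0 → wL.v (algebraMap K L x) = (e : ℤ) * wK.v x

/-- `d` is the valuation `d_{L/K}` of the different of `L/K`, characterized by
`Tr_{L/K}(𝔭_L^i) ⊆ O_K ↔ i ≥ -d` for all `i : ℤ`. -/
def IsDifferentVal (wK : LocalFieldStruct K) (wL : LocalFieldStruct L)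
    [Algebra K L] (d : ℤ) : Prop :=
  ∀ i : ℤ,
    (∀ x : L, (x ≠ 0 → i ≤ wL.v x) → wK.Integral (Algebra.trace K L x)) ↔ -d ≤ i

end LocalFieldStruct

/-- `x` is a normal basis generator of `L` over `K`: the Galois conjugates of
`x` form a `K`-basis of `L`. -/
def IsNormalElement (K : Type) [Field K] {L : Type} [Field L] [Algebra K L]
    (x : L) : Prop :=
  LinearIndependent K (fun σ : L ≃ₐ[K] L => σ x) ∧
    Submodule.span K (Set.range fun σ : L ≃ₐ[K] L => σ x) = ⊤

/-- The valuation criterion `VC(L/K)`, for an extension with ramification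
index `e` and different of valuation `d`: every nonzero `x ∈ L` with
`v_L(x) ≡ -d-1 (mod e)` is a normal basis generator of `L` over `K`. -/
def VC (K : Type) [Field K] {L : Type} [Field L] [Algebra K L]
    (wL : LocalFieldStruct L) (e : ℕ) (d : ℤ) : Prop :=
  ∀ x : L, x ≠ 0 → Int.ModEq (e : ℤ) (wL.v x) (-d - 1) → IsNormalElement K x

section AuxLemmas

namespace LocalFieldStruct

variable {K : Type} [Field K]

lemma v_one' (w : LocalFieldStruct K) : w.v 1 = 0 := by
  have h := w.v_mul 1 1 one_ne_zero one_ne_zero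
  rw [one_mul] at h; omega

lemma v_inv' (w : LocalFieldStruct K) {x : K} (hx : x ≠ 0) : w.v x⁻¹ = -w.v x := by
  have h := w.v_mul x x⁻¹ hx (inv_ne_zero hx)
  rw [mul_inv_cancel₀ hx, w.v_one'] at h; omega

end LocalFieldStruct

lemma algebraMap_ne_zero' {L M : Type} [Field L] [Field M] [Algebra L M] {x : L} (hx : x ≠ 0) :
    algebraMap L M x ≠ 0 :=
  fun h => hx ((algebraMap L M).injective (by rw [h, map_zero]))

lemma trace_algebraMap_mul {L M : Type} [Field L] [Field M] [Algebra L M]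
    [FiniteDimensional L M] (c : L) (x : M) :
    Algebra.trace L M (algebraMap L M c * x) = c * Algebra.trace L M x := by
  rw [← Algebra.smul_def, map_smul, smul_eq_mul]

open LocalFieldStruct in
lemma diff_sub_dvd {K L M : Type} [Field K] [Field L] [Field M]
    [Algebra K L] [Algebra L M] [Algebra K M] [IsScalarTower K L M]
    [FiniteDimensional K M]
    (wK : LocalFieldStruct K) (wL : LocalFieldStruct L) (wM : LocalFieldStruct M)
    (eML : ℕ) (heML : IsRamificationIndex wL wM eML)
    {dMK dML : ℤ} (hdMK : IsDifferentVal wK wM dMK) (hdML : IsDifferentVal wL wM dML) :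
    (eML : ℤ) ∣ dMK - dML := by
  haveI : FiniteDimensional K L := FiniteDimensional.left K L M
  haveI : FiniteDimensional L M := FiniteDimensional.right K L M
  set e : ℤ := (eML : ℤ) with he
  have hepos : 0 < e := by rw [he]; exact_mod_cast heML.1
  have key : ∀ i q s : ℤ, i + dML = e * q + s → 0 ≤ s → s < e →
      ((∀ x : M, (x ≠ 0 → i ≤ wM.v x) → wK.Integral (Algebra.trace K M x)) ↔
       (∀ y : L, (y ≠ 0 → q ≤ wL.v y) → wK.Integral (Algebra.trace K L y))) := by
    intro i q s hqs hs0 hse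
    have hq1 : e * (q + 1) = e * q + e := by ring
    constructor
    · intro hA
      have hnB : ¬ (∀ z : M, (z ≠ 0 → (i - e * (q + 1)) ≤ wM.v z) →
          wL.Integral (Algebra.trace L M z)) := by
        rw [hdML]
        simp only [not_le]
        linarith
      push_neg at hnB
      obtain ⟨z, hz1, hz2⟩ := hnB
      rw [LocalFieldStruct.Integral, not_or, not_le] at hz2
      obtain ⟨ht0ne, ht0v⟩ := hz2
      have hzne : z ≠ 0 := by rintro rfl; exact ht0ne (map_zero _)
      obtain ⟨π, hπ0, hπv⟩ := wL.v_surj (q + 1)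
      set x₀ : M := algebraMap L M π * z with hx₀
      have hx₀ne : x₀ ≠ 0 := mul_ne_zero (algebraMap_ne_zero' hπ0) hzne
      have hvx₀ : i ≤ wM.v x₀ := by
        rw [hx₀, wM.v_mul _ _ (algebraMap_ne_zero' hπ0) hzne, heML.2 π hπ0, hπv]
        have := hz1 hzne
        linarith
      set t : L := Algebra.trace L M x₀ with ht
      have htt0 : t = π * Algebra.trace L M z := by rw [ht, hx₀, trace_algebraMap_mul]
      have htne : t ≠ 0 := by rw [htt0]; exact mul_ne_zero hπ0 ht0ne
      have hvt : wL.v t ≤ q := by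
        rw [htt0, wL.v_mul _ _ hπ0 ht0ne, hπv]
        omega
      intro y hy
      by_cases hy0 : y = 0
      · exact Or.inl (by rw [hy0, map_zero])
      · have hyv : q ≤ wL.v y := hy hy0
        set c : L := y * t⁻¹ with hc
        have hcne : c ≠ 0 := mul_ne_zero hy0 (inv_ne_zero htne)
        have hvc : 0 ≤ wL.v c := by
          rw [hc, wL.v_mul _ _ hy0 (inv_ne_zero htne), wL.v_inv' htne]
          omega
        have h3 : i ≤ wM.v (algebraMap L M c * x₀) := by
          rw [wM.v_mul _ _ (algebraMap_ne_zero' hcne) hx₀ne, heML.2 c hcne]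
          have : 0 ≤ e * wL.v c := mul_nonneg (le_of_lt hepos) hvc
          linarith
        have h4 := hA _ (fun _ => h3)
        have h5 : Algebra.trace L M (algebraMap L M c * x₀) = y := by
          rw [trace_algebraMap_mul, ← ht, hc, inv_mul_cancel_right₀ htne]
        rwa [← Algebra.trace_trace (S := L), h5] at h4
    · intro hC x hx
      rw [← Algebra.trace_trace (S := L)]
      apply hC
      intro hyne
      have hxne : x ≠ 0 := by rintro rfl; exact hyne (map_zero _)
      obtain ⟨π, hπ0, hπv⟩ := wL.v_surj (-q)
      have hB : ∀ z : M, (z ≠ 0 → (i - e * q) ≤ wM.v z) → wL.Integral (Algebra.trace L M z) :=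
        (hdML (i - e * q)).mpr (by linarith)
      have h6 := hB (algebraMap L M π * x) (fun _ => by
        rw [wM.v_mul _ _ (algebraMap_ne_zero' hπ0) hxne, heML.2 π hπ0, hπv]
        have := hx hxne
        linarith)
      rw [trace_algebraMap_mul] at h6
      rcases h6 with h6 | h6
      · exact absurd ((mul_eq_zero.mp h6).resolve_left hπ0) hyne
      · rw [wL.v_mul _ _ hπ0 hyne, hπv] at h6
        omega
  have hA1 : ∀ x : M, (x ≠ 0 → -dMK ≤ wM.v x) → wK.Integral (Algebra.trace K M x) :=
    (hdMK (-dMK)).mpr le_rfl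
  have hA2 : ¬ (∀ x : M, (x ≠ 0 → (-dMK - 1) ≤ wM.v x) → wK.Integral (Algebra.trace K M x)) := by
    rw [hdMK]
    omega
  obtain ⟨q, s, h1, h2, h3⟩ : ∃ q s : ℤ, -dMK + dML = e * q + s ∧ 0 ≤ s ∧ s < e :=
    ⟨(-dMK + dML) / e, (-dMK + dML) % e, (Int.mul_ediv_add_emod _ _).symm,
      Int.emod_nonneg _ (ne_of_gt hepos), Int.emod_lt_of_pos _ hepos⟩
  by_cases hs : s = 0
  · exact ⟨-q, by rw [mul_neg]; linarith⟩
  · exfalso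
    exact hA2 ((key (-dMK - 1) q (s - 1) (by linarith) (by omega) (by omega)).mpr
      ((key (-dMK) q s (by linarith) h2 h3).mp hA1))

end AuxLemmas

section NormalAux

lemma normal_smul' {L M : Type} [Field L] [Field M] [Algebra L M]
    (lam : L) (hlam : lam ≠ 0) (y : M) (h : IsNormalElement L y) :
    IsNormalElement L (algebraMap L M lam * y) := by
  let e : M ≃ₗ[L] M := LinearEquiv.smulOfNeZero L M lam hlam
  have hfun : (fun σ : M ≃ₐ[L] M => σ (algebraMap L M lam * y)) =
      (e : M →ₗ[L] M) ∘ (fun σ : M ≃ₐ[L] M => σ y) := by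
    funext σ
    show σ (algebraMap L M lam * y) = lam • σ y
    rw [map_mul, AlgEquiv.commutes, Algebra.smul_def]
  constructor
  · rw [hfun]
    exact h.1.map' (e : M →ₗ[L] M) e.ker
  · rw [hfun, Set.range_comp, Submodule.span_image, h.2, Submodule.map_top]
    exact LinearMap.range_eq_top.mpr e.surjective

open LocalFieldStruct in
lemma normal_tower {K L M : Type} [Field K] [Field L] [Field M]
    [Algebra K L] [Algebra L M] [Algebra K M] [IsScalarTower K L M]
    [FiniteDimensional K M] [IsGalois L M]
    (habelian : ∀ σ τ : M ≃ₐ[L] M, σ * τ = τ * σ)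
    (r : ℕ) (hr : Monoid.exponent (M ≃ₐ[L] M) = r)
    (hζex : ∃ ζ : K, IsPrimitiveRoot ζ r)
    (x : M) (hx : IsNormalElement K x) : IsNormalElement L x := by
  haveI : FiniteDimensional L M := FiniteDimensional.right K L M
  obtain ⟨ζ, hζ⟩ := hζex
  letI instCG : CommGroup (M ≃ₐ[L] M) :=
    { (inferInstance : Group (M ≃ₐ[L] M)) with mul_comm := habelian }
  haveI : HasEnoughRootsOfUnity K (Monoid.exponent (M ≃ₐ[L] M)) :=
    { prim := ⟨ζ, hr ▸ hζ⟩, cyc := inferInstance }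
  obtain ⟨eqv⟩ := CommGroup.monoidHom_mulEquiv_of_hasEnoughRootsOfUnity (M ≃ₐ[L] M) K
  haveI : Finite ((M ≃ₐ[L] M) →* Kˣ) := Finite.of_equiv _ eqv.symm.toEquiv
  haveI fintypeChars : Fintype ((M ≃ₐ[L] M) →* Kˣ) := Fintype.ofFinite _
  haveI : Nonempty ((M ≃ₐ[L] M) →* Kˣ) := ⟨1⟩
  have hrpos : 0 < r := by
    rw [← hr]
    exact Nat.pos_of_ne_zero Monoid.exponent_ne_zero_of_finite
  -- column orthogonality: sum of a nontrivial "column" of the character table vanishes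
  have hT0 : ∀ s : M ≃ₐ[L] M, s ≠ 1 →
      (∑ χ : (M ≃ₐ[L] M) →* Kˣ, ((χ s : Kˣ) : K)) = 0 := by
    intro s hs
    obtain ⟨χ₁, hχ₁⟩ :=
      CommGroup.exists_apply_ne_one_of_hasEnoughRootsOfUnity (M ≃ₐ[L] M) K hs
    have hre : (∑ χ : (M ≃ₐ[L] M) →* Kˣ, (((χ₁ * χ) s : Kˣ) : K))
        = ∑ χ : (M ≃ₐ[L] M) →* Kˣ, ((χ s : Kˣ) : K) :=
      Fintype.sum_equiv (Equiv.mulLeft χ₁) _ _ (fun χ => rfl)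
    have hsum : (∑ χ : (M ≃ₐ[L] M) →* Kˣ, (((χ₁ * χ) s : Kˣ) : K))
        = ((χ₁ s : Kˣ) : K) * ∑ χ : (M ≃ₐ[L] M) →* Kˣ, ((χ s : Kˣ) : K) := by
      rw [Finset.mul_sum]
      exact Finset.sum_congr rfl fun χ _ => by
        simp [MonoidHom.mul_apply, Units.val_mul]
    have hne : ((χ₁ s : Kˣ) : K) - 1 ≠ 0 := by
      rw [sub_ne_zero]
      exact fun hcontra => hχ₁ (Units.ext (by rw [hcontra, Units.val_one]))
    have hzero : (((χ₁ s : Kˣ) : K) - 1) * (∑ χ : (M ≃ₐ[L] M) →* Kˣ, ((χ s : Kˣ) : K)) = 0 := by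
      rw [sub_mul, one_mul, ← hsum, hre, sub_self]
    exact (mul_eq_zero.mp hzero).resolve_left hne
  -- the cardinality of the character group is nonzero in K
  have hcard : ((Fintype.card ((M ≃ₐ[L] M) →* Kˣ) : K)) ≠ 0 := by
    intro h0
    haveI := ringChar.charP K
    rcases CharP.char_is_prime_or_zero K (ringChar K) with hp | hp
    · haveI : Fact (ringChar K).Prime := ⟨hp⟩
      have hdvd : ringChar K ∣ Fintype.card ((M ≃ₐ[L] M) →* Kˣ) :=
        (CharP.cast_eq_zero_iff K (ringChar K) _).mp h0
      obtain ⟨χ, hχord⟩ := exists_prime_orderOf_dvd_card (ringChar K) hdvd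
      have hτr : ∀ τ : M ≃ₐ[L] M, τ ^ r = 1 := fun τ => by
        rw [← hr]; exact Monoid.pow_exponent_eq_one τ
      have hχr : χ ^ r = 1 := MonoidHom.ext fun τ => by
        rw [MonoidHom.pow_apply, ← map_pow, hτr τ, map_one, MonoidHom.one_apply]
      have hord : ringChar K ∣ r := hχord ▸ orderOf_dvd_of_pow_eq_one hχr
      obtain ⟨s', hs'⟩ := hord
      have hs'pos : 0 < s' := by
        rcases Nat.eq_zero_or_pos s' with h | h
        · rw [h, mul_zero] at hs'; omega
        · exact h
      have hs'lt : s' < r := by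
        have h2 : 2 * s' ≤ ringChar K * s' := Nat.mul_le_mul_right _ hp.two_le
        linarith
      have hζs' : ζ ^ s' = 1 := by
        have hpow : (ζ ^ s') ^ (ringChar K) = 1 := by
          rw [← pow_mul, mul_comm, ← hs']
          exact hζ.pow_eq_one
        have h2 : (ζ ^ s' - 1) ^ (ringChar K) = 0 := by
          rw [sub_pow_char, hpow, one_pow, sub_self]
        exact sub_eq_zero.mp (pow_eq_zero_iff hp.ne_zero |>.mp h2)
      exact hζ.pow_ne_one_of_pos_of_lt hs'pos.ne' hs'lt hζs'
    · haveI : CharP K 0 := hp ▸ ringChar.charP K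
      haveI : CharZero K := CharP.charP_to_charZero K
      exact Nat.cast_ne_zero.mpr Fintype.card_ne_zero h0
  -- K-linear independence of the H-conjugates
  have hKli : LinearIndependent K (fun τ : M ≃ₐ[L] M => τ x) :=
    hx.1.comp (fun τ : M ≃ₐ[L] M => AlgEquiv.restrictScalars K τ)
      (AlgEquiv.restrictScalars_injective K)
  -- the character components of x are nonzero
  have hyne : ∀ χ : (M ≃ₐ[L] M) →* Kˣ,
      (∑ τ : M ≃ₐ[L] M, (((χ τ)⁻¹ : Kˣ) : K) • τ x) ≠ 0 := by
    intro χ h0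
    have h1 := Fintype.linearIndependent_iff.mp hKli
      (fun τ => (((χ τ)⁻¹ : Kˣ) : K)) h0 1
    simp at h1
  -- L-linear independence of the H-conjugates
  have hLli : LinearIndependent L (fun τ : M ≃ₐ[L] M => τ x) := by
    rw [Fintype.linearIndependent_iff]
    intro b hb τ₀
    set k : ((M ≃ₐ[L] M) →* Kˣ) → (M ≃ₐ[L] M) → K := fun χ τ => (((χ τ)⁻¹ : Kˣ) : K) with hk
    have hkmul : ∀ (χ : (M ≃ₐ[L] M) →* Kˣ) (τ τ' : M ≃ₐ[L] M),
        ((χ τ : Kˣ) : K) * k χ (τ' * τ) = k χ τ' := by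
      intro χ τ τ'
      simp only [hk, map_mul, mul_inv_rev, Units.val_mul]
      rw [← mul_assoc, Units.mul_inv, one_mul]
    have hstep : ∀ χ : (M ≃ₐ[L] M) →* Kˣ,
        (∑ τ : M ≃ₐ[L] M, b τ * algebraMap K L ((χ τ : Kˣ) : K)) = 0 := by
      intro χ
      have h0 : (∑ τ' : M ≃ₐ[L] M, k χ τ' • τ' (∑ τ : M ≃ₐ[L] M, b τ • τ x)) = 0 := by
        rw [hb]
        simp
      have hexp : (∑ τ' : M ≃ₐ[L] M, k χ τ' • τ' (∑ τ : M ≃ₐ[L] M, b τ • τ x))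
          = (∑ τ : M ≃ₐ[L] M, b τ * algebraMap K L ((χ τ : Kˣ) : K)) •
            (∑ τ : M ≃ₐ[L] M, k χ τ • τ x) := by
        calc (∑ τ' : M ≃ₐ[L] M, k χ τ' • τ' (∑ τ : M ≃ₐ[L] M, b τ • τ x))
            = ∑ τ' : M ≃ₐ[L] M, ∑ τ : M ≃ₐ[L] M, b τ • (k χ τ' • (τ' * τ) x) := by
              refine Finset.sum_congr rfl fun τ' _ => ?_
              rw [map_sum, Finset.smul_sum]
              refine Finset.sum_congr rfl fun τ _ => ?_
              rw [map_smul, smul_comm, AlgEquiv.mul_apply]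
          _ = ∑ τ : M ≃ₐ[L] M, ∑ τ' : M ≃ₐ[L] M, b τ • (k χ τ' • (τ' * τ) x) :=
              Finset.sum_comm
          _ = ∑ τ : M ≃ₐ[L] M, b τ •
                (((χ τ : Kˣ) : K) • ∑ s : M ≃ₐ[L] M, k χ s • s x) := by
              refine Finset.sum_congr rfl fun τ _ => ?_
              rw [Finset.smul_sum, Finset.smul_sum]
              refine Fintype.sum_equiv (Equiv.mulRight τ) _ _ fun τ' => ?_
              simp only [Equiv.coe_mulRight]
              rw [smul_smul, hkmul χ τ τ']
          _ = ∑ τ : M ≃ₐ[L] M, (b τ * algebraMap K L ((χ τ : Kˣ) : K)) •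
                (∑ s : M ≃ₐ[L] M, k χ s • s x) := by
              refine Finset.sum_congr rfl fun τ _ => ?_
              rw [← algebraMap_smul L (((χ τ : Kˣ) : K)) (∑ s : M ≃ₐ[L] M, k χ s • s x),
                smul_smul]
          _ = (∑ τ : M ≃ₐ[L] M, b τ * algebraMap K L ((χ τ : Kˣ) : K)) •
                (∑ s : M ≃ₐ[L] M, k χ s • s x) := (Finset.sum_smul).symm
      rw [hexp] at h0
      exact (smul_eq_zero.mp h0).resolve_right (hyne χ)
    -- sum the relations over all characters, weighted by (χ τ₀)⁻¹
    have hfinal : (∑ χ : (M ≃ₐ[L] M) →* Kˣ, algebraMap K L (k χ τ₀) *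
        (∑ τ : M ≃ₐ[L] M, b τ * algebraMap K L ((χ τ : Kˣ) : K))) = 0 :=
      Finset.sum_eq_zero fun χ _ => by rw [hstep χ, mul_zero]
    have hswap : (∑ χ : (M ≃ₐ[L] M) →* Kˣ, algebraMap K L (k χ τ₀) *
        (∑ τ : M ≃ₐ[L] M, b τ * algebraMap K L ((χ τ : Kˣ) : K)))
        = ∑ τ : M ≃ₐ[L] M, b τ *
            algebraMap K L (∑ χ : (M ≃ₐ[L] M) →* Kˣ, k χ τ₀ * ((χ τ : Kˣ) : K)) := by
      calc (∑ χ : (M ≃ₐ[L] M) →* Kˣ, algebraMap K L (k χ τ₀) *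
            (∑ τ : M ≃ₐ[L] M, b τ * algebraMap K L ((χ τ : Kˣ) : K)))
          = ∑ χ : (M ≃ₐ[L] M) →* Kˣ, ∑ τ : M ≃ₐ[L] M,
              b τ * algebraMap K L (k χ τ₀ * ((χ τ : Kˣ) : K)) := by
            refine Finset.sum_congr rfl fun χ _ => ?_
            rw [Finset.mul_sum]
            refine Finset.sum_congr rfl fun τ _ => ?_
            rw [map_mul]
            ring
        _ = ∑ τ : M ≃ₐ[L] M, ∑ χ : (M ≃ₐ[L] M) →* Kˣ,
              b τ * algebraMap K L (k χ τ₀ * ((χ τ : Kˣ) : K)) := Finset.sum_comm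
        _ = ∑ τ : M ≃ₐ[L] M, b τ *
              algebraMap K L (∑ χ : (M ≃ₐ[L] M) →* Kˣ, k χ τ₀ * ((χ τ : Kˣ) : K)) := by
            refine Finset.sum_congr rfl fun τ _ => ?_
            rw [← Finset.mul_sum, ← map_sum]
    have hinner : ∀ τ : M ≃ₐ[L] M,
        (∑ χ : (M ≃ₐ[L] M) →* Kˣ, k χ τ₀ * ((χ τ : Kˣ) : K))
        = ∑ χ : (M ≃ₐ[L] M) →* Kˣ, ((χ (τ₀⁻¹ * τ) : Kˣ) : K) := by
      intro τ
      refine Finset.sum_congr rfl fun χ _ => ?_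
      simp only [hk, map_mul, map_inv, Units.val_mul]
    have hsingle : (∑ τ : M ≃ₐ[L] M, b τ *
        algebraMap K L (∑ χ : (M ≃ₐ[L] M) →* Kˣ, k χ τ₀ * ((χ τ : Kˣ) : K)))
        = b τ₀ * algebraMap K L ((Fintype.card ((M ≃ₐ[L] M) →* Kˣ) : K)) := by
      rw [Finset.sum_eq_single τ₀]
      · congr 2
        rw [hinner τ₀]
        simp only [inv_mul_cancel, map_one, Units.val_one]
        rw [Finset.sum_const, nsmul_eq_mul, mul_one, Finset.card_univ]
      · intro τ _ hττ₀
        have h1 : τ₀⁻¹ * τ ≠ 1 := by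
          rw [Ne, inv_mul_eq_one]
          exact fun h => hττ₀ h.symm
        rw [hinner τ, hT0 _ h1, map_zero, mul_zero]
      · intro h
        exact absurd (Finset.mem_univ τ₀) h
    rw [hswap, hsingle] at hfinal
    rcases mul_eq_zero.mp hfinal with h | h
    · exact h
    · exact absurd ((algebraMap K L).injective (by rw [h, map_zero])) hcard
  haveI : Nonempty (M ≃ₐ[L] M) := ⟨1⟩
  exact ⟨hLli, hLli.span_eq_top_of_card_eq_finrank (Nat.card_eq_fintype_card.symm.trans (IsGalois.card_aut_eq_finrank L M))⟩

end NormalAux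

open LocalFieldStruct in
/-- **Lemma (topkummer).** Let `M/K` be a finite Galois extension of local
fields and let `L` be an intermediate field which is normal over `K`.  If
`M/L` is abelian of exponent `r` and `K` contains a primitive `r`-th root of
unity, then `VC(M/K)` implies `VC(M/L)`; moreover every `x ∈ M` which is
normal over `K` is also normal over `L`. -/
theorem statement9 {K L M : Type} [Field K] [Field L] [Field M]
    [Algebra K L] [Algebra L M] [Algebra K M] [IsScalarTower K L M]
    [FiniteDimensional K M] [IsGalois K M] [Normal K L] [IsGalois L M]
    (habelian : ∀ σ τ : M ≃ₐ[L] M, σ * τ = τ * σ)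
    (r : ℕ) (hr : Monoid.exponent (M ≃ₐ[L] M) = r)
    (hζ : ∃ ζ : K, IsPrimitiveRoot ζ r)
    (wK : LocalFieldStruct K) (wL : LocalFieldStruct L) (wM : LocalFieldStruct M)
    (eMK : ℕ) (heMK : IsRamificationIndex wK wM eMK)
    (dMK : ℤ) (hdMK : IsDifferentVal wK wM dMK)
    (eML : ℕ) (heML : IsRamificationIndex wL wM eML)
    (dML : ℤ) (hdML : IsDifferentVal wL wM dML) :
    (VC K wM eMK dMK → VC L wM eML dML) ∧
      (∀ x : M, IsNormalElement K x → IsNormalElement L x) := by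
  have part2 : ∀ x : M, IsNormalElement K x → IsNormalElement L x :=
    fun x hx => normal_tower habelian r hr hζ x hx
  refine ⟨?_, part2⟩
  intro hVC x hx hmod
  obtain ⟨D, hD⟩ : ((eML : ℤ)) ∣ dMK - dML :=
    diff_sub_dvd wK wL wM eML heML hdMK hdML
  obtain ⟨m, hm⟩ : ((eML : ℤ)) ∣ (-dML - 1) - wM.v x := hmod.dvd
  obtain ⟨lam, hlam0, hlamv⟩ := wL.v_surj (m - D)
  have hc0 : algebraMap L M lam ≠ 0 := algebraMap_ne_zero' hlam0
  have hvy : wM.v (algebraMap L M lam * x) = -dMK - 1 := by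
    rw [wM.v_mul _ _ hc0 hx, heML.2 lam hlam0, hlamv]
    have hexp : (eML : ℤ) * (m - D) = (eML : ℤ) * m - (eML : ℤ) * D := by ring
    linarith
  have h1 : IsNormalElement K (algebraMap L M lam * x) :=
    hVC _ (mul_ne_zero hc0 hx) (by rw [hvy])
  have h2 := part2 _ h1
  have h3 := normal_smul' lam⁻¹ (inv_ne_zero hlam0) _ h2
  rwa [map_inv₀, inv_mul_cancel_left₀ hc0] at h3
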